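/- Let μ ∈ (ℂ∖ℤ)^n, let λ ∈ (1/2+ℤ)^n be a dominant so(2n)-weight, fix 2 ≤ k ≤ n, and let T(L) ∈ B(μ,λ) satisfy ℓ'_{k1} = 1/2, ℓ'_{kk} = ℓ_{kk}, ℓ_{ki} = ℓ'_{ki} = ℓ_{k−1,i} for all 2 ≤ i ≤ k−1, and ℓ_{k1} + ℓ_{k−1,1} = 1. Then for every m ∈ [k−1], provided all denominators occurring are nonzero, ∑_{i=1}^{k} D_{ki1m}(L) · B_{ki}(L+δ^{(ki)'}+δ^{(k−1,1)}) = 0. -/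

import Mathlib

open scoped BigOperators Classical

noncomputable section

namespace GTpaper

/-- `a - b ∈ ℤ≥0`, the integer-shift order `a ≥ b` on `ℂ`. -/
def IntGE (a b : ℂ) : Prop := ∃ m : ℕ, a = b + m

/-- `a - b ∈ ℤ>0`, the strict integer-shift order `a > b` on `ℂ`. -/
def IntGT (a b : ℂ) : Prop := ∃ m : ℕ, a = b + m + 1

/-- `a ∈ ℤ` as a subset of `ℂ`. -/
def IsInt (a : ℂ) : Prop := ∃ m : ℤ, a = m

/-- `a ∈ 1/2 + ℤ` as a subset of `ℂ`. -/
def IsHalfInt (a : ℂ) : Prop := ∃ m : ℤ, a = (m : ℂ) + 1 / 2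

/-- A tableau: a doubly indexed family of unprimed entries `u k i` (`ℓ_{ki}`) and primed
entries `p k i` (`ℓ'_{ki}`).  Only positions with `1 ≤ i ≤ k ≤ n` (resp. `2 ≤ i` for the primed
entries of type-`D` tableaux) are relevant; normalization predicates below set the rest to `0`. -/
structure Tab (R : Type*) where
  u : ℕ → ℕ → R
  p : ℕ → ℕ → R

instance : Add (Tab ℤ) :=
  ⟨fun a b => ⟨fun k i => a.u k i + b.u k i, fun k i => a.p k i + b.p k i⟩⟩

instance : Neg (Tab ℤ) := ⟨fun a => ⟨fun k i => -a.u k i, fun k i => -a.p k i⟩⟩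

/-- Add an integer tableau `Z` to a tableau `L`. -/
def Tab.addZ {R : Type*} [Ring R] (L : Tab R) (Z : Tab ℤ) : Tab R :=
  ⟨fun k i => L.u k i + (Z.u k i : R), fun k i => L.p k i + (Z.p k i : R)⟩

/-- `δ^{(k i)}`: the integer tableau with a single `1` at unprimed position `(k,i)`. -/
def deltaU (k i : ℕ) : Tab ℤ :=
  ⟨fun a b => if a = k ∧ b = i then 1 else 0, fun _ _ => 0⟩

/-- `δ^{(k i)'}`: the integer tableau with a single `1` at primed position `(k,i)`. -/
def deltaP (k i : ℕ) : Tab ℤ :=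
  ⟨fun _ _ => 0, fun a b => if a = k ∧ b = i then 1 else 0⟩

section Coeffs

variable {F : Type*} [Field F]

/-- `ω_k(L)`, the `k`-th component of the `C`-weight of a type-`C` tableau. -/
def wt (k : ℕ) (L : Tab F) : F :=
  2 * (∑ i ∈ Finset.Icc 1 k, L.p k i) - (∑ i ∈ Finset.Icc 1 k, L.u k i) -
    (∑ i ∈ Finset.Icc 1 (k - 1), L.u (k - 1) i) + (k : F) - 1 / 2

/-- `A_{ki}(L)`. -/
def coA (k i : ℕ) (L : Tab F) : F :=
  ∏ a ∈ (Finset.Icc 1 k).erase i, (L.p k a - L.p k i)⁻¹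

/-- `B_{ki}(L)`. -/
def coB (k i : ℕ) (L : Tab F) : F :=
  2 * coA k i L * (2 * L.p k i - 1) * (∏ a ∈ Finset.Icc 1 k, (L.u k a - L.p k i)) *
    ∏ a ∈ Finset.Icc 1 (k - 1), (L.u (k - 1) a - L.p k i)

/-- `C_{ki}(L)`. -/
def coC (k i : ℕ) (L : Tab F) : F :=
  (2 * L.u (k - 1) i - 1)⁻¹ *
    ∏ a ∈ (Finset.Icc 1 (k - 1)).erase i,
      ((L.u (k - 1) i - L.u (k - 1) a) * (L.u (k - 1) i + L.u (k - 1) a - 1))⁻¹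

/-- `D_{kijm}(L)`. -/
def coD (k i j m : ℕ) (L : Tab F) : F :=
  coA k i L * coA (k - 1) m L * coC k j L *
    (∏ a ∈ (Finset.Icc 1 k).erase i, (L.u (k - 1) j ^ 2 - L.p k a ^ 2)) *
    ∏ a ∈ (Finset.Icc 1 (k - 1)).erase m, (L.u (k - 1) j ^ 2 - L.p (k - 1) a ^ 2)

end Coeffs

/-- The `C`-weight `ω(T(L)) ∈ ℂ^n` of a type-`C` tableau. -/
def cwtv (n : ℕ) (T : Tab ℂ) : Fin n → ℂ := fun k => wt ((k : ℕ) + 1) T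

/-- A type-`C` tableau is `C`-standard (conditions (7) and (8)). -/
def IsCStandard (n : ℕ) (T : Tab ℂ) : Prop :=
  ∀ k, 1 ≤ k → k ≤ n →
    (IntGE (-(1 / 2)) (T.p k 1) ∧
      (∀ i, 1 ≤ i → i ≤ k → IntGE (T.p k i) (T.u k i)) ∧
      (∀ i, 1 ≤ i → i + 1 ≤ k → IntGT (T.u k i) (T.p k (i + 1))) ∧
      (2 ≤ k →
        (∀ i, 1 ≤ i → i ≤ k - 1 → IntGE (T.p k i) (T.u (k - 1) i)) ∧
        (∀ i, 1 ≤ i → i ≤ k - 1 → IntGT (T.u (k - 1) i) (T.p k (i + 1)))))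

/-- A type-`D` tableau is `D`-standard (conditions (5) and (6)); primed entries `p k 1`
are irrelevant. -/
def IsDStandard (n : ℕ) (T : Tab ℂ) : Prop :=
  ∀ k, 2 ≤ k → k ≤ n →
    (IntGE (-T.p k 2) (T.u k 1) ∧
      (∀ i, 2 ≤ i → i ≤ k → IntGE (T.p k i) (T.u k i)) ∧
      (∀ i, 1 ≤ i → i + 1 ≤ k → IntGT (T.u k i) (T.p k (i + 1))) ∧
      IntGE (-T.p k 2) (T.u (k - 1) 1) ∧
      (∀ i, 2 ≤ i → i ≤ k - 1 → IntGE (T.p k i) (T.u (k - 1) i)) ∧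
      (∀ i, 1 ≤ i → i ≤ k - 1 → IntGT (T.u (k - 1) i) (T.p k (i + 1))))

/-- `C`-regularity of a type-`C` tableau. -/
def IsCRegular (n : ℕ) (T : Tab ℂ) : Prop :=
  (∀ k i a, 1 ≤ i → i ≤ k → 1 ≤ a → a ≤ k → k ≤ n → i ≠ a → T.p k a ≠ T.p k i) ∧
  (∀ k i a, 1 ≤ i → i ≤ k → 1 ≤ a → a ≤ k → k ≤ n - 1 → i ≠ a → T.u k a ≠ T.u k i) ∧
  (∀ k i a, 1 ≤ i → i ≤ k → 1 ≤ a → a ≤ k → k ≤ n - 1 → i ≠ a → T.u k a + T.u k i ≠ 1) ∧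
  (∀ k i, 1 ≤ i → i ≤ k → k ≤ n - 1 → T.u k i ≠ 1 / 2)

/-- `C`-genericity of a type-`C` tableau. -/
def IsCGeneric (n : ℕ) (T : Tab ℂ) : Prop :=
  (∀ k i a, 1 ≤ i → i ≤ k → 1 ≤ a → a ≤ k → k ≤ n → i ≠ a → ¬IsInt (T.p k a - T.p k i)) ∧
  (∀ k i a, 1 ≤ i → i ≤ k → 1 ≤ a → a ≤ k → k ≤ n - 1 → i ≠ a → ¬IsInt (T.u k a - T.u k i)) ∧
  (∀ k i a, 1 ≤ i → i ≤ k → 1 ≤ a → a ≤ k → k ≤ n - 1 → ¬IsInt (T.u k a + T.u k i)) ∧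
  (∀ k i, 1 ≤ i → i ≤ k → k ≤ n - 1 → ¬IsHalfInt (T.u k i))

/-- Normalization of a type-`C` tableau: all entries outside `1 ≤ i ≤ k ≤ n` vanish. -/
def CNorm (n : ℕ) (T : Tab ℂ) : Prop :=
  (∀ k i, ¬(1 ≤ i ∧ i ≤ k ∧ k ≤ n) → T.u k i = 0) ∧
  (∀ k i, ¬(1 ≤ i ∧ i ≤ k ∧ k ≤ n) → T.p k i = 0)

/-- Normalization of a type-`D` tableau: unprimed entries outside `1 ≤ i ≤ k ≤ n` and primed
entries outside `2 ≤ i ≤ k ≤ n` vanish. -/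
def DNorm (n : ℕ) (T : Tab ℂ) : Prop :=
  (∀ k i, ¬(1 ≤ i ∧ i ≤ k ∧ k ≤ n) → T.u k i = 0) ∧
  (∀ k i, ¬(2 ≤ i ∧ i ≤ k ∧ k ≤ n) → T.p k i = 0)

/-- A dominant `so(2n)`-weight. -/
def SODominant {n : ℕ} (lam : Fin n → ℂ) : Prop :=
  (∀ i j : Fin n, (i : ℕ) + 1 = (j : ℕ) → IntGE (lam i) (lam j)) ∧
  (∀ i j : Fin n, (i : ℕ) = 0 → (j : ℕ) = 1 → IntGE (-(lam i + lam j)) 0)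

/-- `D_st^λ`: the set of (normalized) `D`-standard tableaux with top row
`ℓ_i = λ_i - i + 3/2` (`1`-based `i`). -/
def DSt (n : ℕ) (lam : Fin n → ℂ) : Set (Tab ℂ) :=
  {T | DNorm n T ∧ IsDStandard n T ∧
    ∀ i : Fin n, T.u n ((i : ℕ) + 1) = lam i - ((i : ℕ) + 1) + 3 / 2}

/-- The type-`D` tableau obtained from a type-`C` tableau by deleting the entries
`ℓ'_{11}, …, ℓ'_{n1}`. -/
def CtoD (W : Tab ℂ) : Tab ℂ := ⟨W.u, fun k i => if i = 1 then 0 else W.p k i⟩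

/-- `𝔅(μ,λ)`: type-`C` tableaux whose left-most primed column is in `μ + ℤ^n` and whose
remaining part is a `D`-standard tableau with top row `λ + ρ_D + 1/2`. -/
def TabB (n : ℕ) (mu lam : Fin n → ℂ) : Set (Tab ℂ) :=
  {W | CNorm n W ∧ (∀ k : Fin n, IsInt (W.p ((k : ℕ) + 1) 1 - mu k)) ∧ CtoD W ∈ DSt n lam}

/-- Membership of a vector of `ℂ^n` in the root lattice `Q_C = {a ∈ ℤ^n | ∑ a_i ∈ 2ℤ}`. -/
def QCvec {n : ℕ} (v : Fin n → ℂ) : Prop :=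
  ∃ q : Fin n → ℤ, (2 ∣ ∑ i, q i) ∧ ∀ i, v i = (q i : ℂ)

/-! ### The symplectic Lie algebra `sp(2n, ℂ)` -/

/-- Index set `{1,…,n} × {±}` for rows/columns of `2n × 2n` matrices: `(k, true)` is the
positive index `k`, `(k, false)` is the negative index `-k`. -/
abbrev SpIdx (n : ℕ) := Fin n × Bool

/-- The sign of an index. -/
def sgnC {n : ℕ} (a : SpIdx n) : ℂ := if a.2 then 1 else -1

/-- `a ↦ -a` on indices. -/
def negIdx {n : ℕ} (a : SpIdx n) : SpIdx n := (a.1, !a.2)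

/-- `F_{ab} = E_{ab} - sgn(a)sgn(b) E_{-b,-a}`. -/
def Fmat (n : ℕ) (a b : SpIdx n) : Matrix (SpIdx n) (SpIdx n) ℂ :=
  Matrix.single a b 1 - Matrix.single (negIdx b) (negIdx a) (sgnC a * sgnC b)

attribute [local instance] LieRing.ofAssociativeRing

/-- `sp(2n, ℂ)`: the Lie subalgebra of `gl(2n, ℂ)` spanned by the `F_{ab}`. -/
def sp (n : ℕ) : LieSubalgebra ℂ (Matrix (SpIdx n) (SpIdx n) ℂ) :=
  LieSubalgebra.lieSpan ℂ _ (Set.range fun x : SpIdx n × SpIdx n => Fmat n x.1 x.2)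

/-- `F_{ab}` as an element of `sp(2n, ℂ)`. -/
def spF (n : ℕ) (a b : SpIdx n) : sp n :=
  ⟨Fmat n a b, LieSubalgebra.subset_lieSpan ⟨(a, b), rfl⟩⟩

/-- The basis vector of the free module on a set `S` of tableaux attached to `L`, with the
convention that `T(L) = 0` whenever `L ∉ S`. -/
def bvec {F : Type*} [Field F] (S : Set (Tab F)) (L : Tab F) : ↥S →₀ F :=
  if h : L ∈ S then Finsupp.single ⟨L, h⟩ 1 else 0

/-- The statement that a Lie algebra homomorphism `ρ : sp(2n,ℂ) → End(V)` acts on the basis `S`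
of tableaux by the Gelfand--Tsetlin formulas (with 1-based row index `k+1` for `k : Fin n`). -/
def GTact (n : ℕ) {F : Type*} [Field F] [Algebra ℂ F] (S : Set (Tab F))
    (ρ : sp n →ₗ⁅ℂ⁆ Module.End ℂ (↥S →₀ F)) : Prop :=
  ∀ L ∈ S,
    (∀ k : Fin n,
      ρ (spF n (k, true) (k, true)) (bvec S L) = wt ((k : ℕ) + 1) L • bvec S L ∧
      ρ (spF n (k, true) (k, false)) (bvec S L) =
        ∑ i ∈ Finset.Icc 1 ((k : ℕ) + 1),
          coA ((k : ℕ) + 1) i L • bvec S (L.addZ (deltaP ((k : ℕ) + 1) i)) ∧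
      ρ (spF n (k, false) (k, true)) (bvec S L) =
        ∑ i ∈ Finset.Icc 1 ((k : ℕ) + 1),
          coB ((k : ℕ) + 1) i L • bvec S (L.addZ (-deltaP ((k : ℕ) + 1) i))) ∧
    (∀ k : Fin n, 1 ≤ (k : ℕ) →
      ρ (spF n (⟨(k : ℕ) - 1, lt_of_le_of_lt (Nat.sub_le _ _) k.isLt⟩, true) (k, false))
          (bvec S L) =
        (∑ i ∈ Finset.Icc 1 (k : ℕ),
          coC ((k : ℕ) + 1) i L • bvec S (L.addZ (-deltaU (k : ℕ) i))) +
        ∑ i ∈ Finset.Icc 1 ((k : ℕ) + 1), ∑ j ∈ Finset.Icc 1 (k : ℕ), ∑ m ∈ Finset.Icc 1 (k : ℕ),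
          coD ((k : ℕ) + 1) i j m L •
            bvec S (L.addZ (deltaP ((k : ℕ) + 1) i + deltaU (k : ℕ) j + deltaP (k : ℕ) m)))

/-- The set of tableaux `{T(L + Z)}` with `Z` an integer tableau vanishing on the unprimed
top row. -/
def orbitB {F : Type*} [Field F] (n : ℕ) (L : Tab F) : Set (Tab F) :=
  {M | ∃ Z : Tab ℤ, (∀ i, Z.u n i = 0) ∧ M = L.addZ Z}

/-- The tableau `T(W^{μ,λ})`. -/
def Wup (n : ℕ) (mu lam : Fin n → ℂ) : Tab ℂ :=
  ⟨fun k i => if h : 1 ≤ i ∧ i ≤ k ∧ k ≤ n then lam ⟨i - 1, by omega⟩ - (i : ℂ) + 3 / 2 else 0,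
   fun k i => if h : 1 ≤ i ∧ i ≤ k ∧ k ≤ n then
      (if i = 1 then mu ⟨k - 1, by omega⟩ else lam ⟨i - 1, by omega⟩ - (i : ℂ) + 3 / 2) else 0⟩

/-- The tableau `T(W_{μ,λ})`. -/
def Wlow (n : ℕ) (mu lam : Fin n → ℂ) : Tab ℂ :=
  ⟨fun k i => if h : 1 ≤ i ∧ i ≤ k ∧ k ≤ n then
      (if i = 1 then
        (if (n - k) % 2 = 0 then lam ⟨0, by omega⟩ + 1 / 2 else 1 - (lam ⟨0, by omega⟩ + 1 / 2))
       else lam ⟨i - 1, by omega⟩ - (i : ℂ) + 3 / 2) else 0,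
   fun k i => if h : 1 ≤ i ∧ i ≤ k ∧ k ≤ n then
      (if i = 1 then mu ⟨k - 1, by omega⟩ else lam ⟨i - 1, by omega⟩ - (i : ℂ) + 3 / 2) else 0⟩

/-- `𝔅_k^+(μ,λ)` for a `1`-based row index `k`. -/
def BkPlus (n : ℕ) (mu lam : Fin n → ℂ) (k : ℕ) : Set (Tab ℂ) :=
  {W | W ∈ TabB n mu lam ∧ IntGE (W.p k 1) (1 / 2)}

end GTpaper

namespace GTpaper

-- aux
lemma Tab.add_u (a b : Tab ℤ) (x y : ℕ) : (a + b).u x y = a.u x y + b.u x y := rfl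
lemma Tab.add_p (a b : Tab ℤ) (x y : ℕ) : (a + b).p x y = a.p x y + b.p x y := rfl
lemma Tab.addZ_u (L : Tab ℂ) (Z : Tab ℤ) (x y : ℕ) :
    (L.addZ Z).u x y = L.u x y + (Z.u x y : ℂ) := rfl
lemma Tab.addZ_p (L : Tab ℂ) (Z : Tab ℤ) (x y : ℕ) :
    (L.addZ Z).p x y = L.p x y + (Z.p x y : ℂ) := rfl

open Polynomial in
lemma lagrange_core {ι : Type*} [DecidableEq ι] (s : Finset ι) (v : ι → ℂ)
    (hv : Set.InjOn v s) (Q : ℂ[X]) (hQ : Q.degree < ((s.card - 1 : ℕ) : WithBot ℕ)) :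
    ∑ i ∈ s, Q.eval (v i) * ∏ a ∈ s.erase i, (v i - v a)⁻¹ = 0 := by
  rcases Finset.eq_empty_or_nonempty s with rfl | hs
  · simp
  have hlt : Q.degree < (s.card : WithBot ℕ) := by
    refine lt_of_lt_of_le hQ ?_
    exact_mod_cast Nat.sub_le s.card 1
  have hint := Lagrange.eq_interpolate hv hlt
  have hco := congrArg (fun p : ℂ[X] => p.coeff (s.card - 1)) hint
  simp only [Lagrange.interpolate_apply, Polynomial.finset_sum_coeff,
    Polynomial.coeff_C_mul] at hco
  have hQ0 : Q.coeff (s.card - 1) = 0 := Polynomial.coeff_eq_zero_of_degree_lt hQ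
  have hb : ∀ i ∈ s, (Lagrange.basis s v i).coeff (s.card - 1)
      = ∏ a ∈ s.erase i, (v i - v a)⁻¹ := by
    intro i hi
    have hnd := Lagrange.natDegree_basis hv hi
    rw [← hnd, Polynomial.coeff_natDegree, Lagrange.basis, Polynomial.leadingCoeff_prod]
    refine Finset.prod_congr rfl fun j hj => ?_
    rw [Lagrange.basisDivisor, Polynomial.leadingCoeff_mul, Polynomial.leadingCoeff_C,
      (Polynomial.monic_X_sub_C (v j)).leadingCoeff, mul_one]
  calc ∑ i ∈ s, Q.eval (v i) * ∏ a ∈ s.erase i, (v i - v a)⁻¹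
      = ∑ i ∈ s, Q.eval (v i) * (Lagrange.basis s v i).coeff (s.card - 1) :=
        Finset.sum_congr rfl fun i hi => by rw [hb i hi]
    _ = 0 := by rw [← hco, hQ0]

open Polynomial in
lemma lagrange_zero {ι : Type*} [DecidableEq ι] (s : Finset ι) (v : ι → ℂ)
    (hv : Set.InjOn v s) (Q : ℂ[X]) (hQ : Q.degree < ((s.card - 1 : ℕ) : WithBot ℕ)) :
    ∑ i ∈ s, Q.eval (v i) * ∏ a ∈ s.erase i, (v a - v i)⁻¹ = 0 := by
  have key := lagrange_core s v hv Q hQ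
  have hcg : ∀ i ∈ s, Q.eval (v i) * ∏ a ∈ s.erase i, (v a - v i)⁻¹
      = (-1) ^ (s.card - 1) * (Q.eval (v i) * ∏ a ∈ s.erase i, (v i - v a)⁻¹) := by
    intro i hi
    have h1 : ∏ a ∈ s.erase i, (v a - v i)⁻¹
        = ∏ a ∈ s.erase i, (-1) * (v i - v a)⁻¹ := by
      refine Finset.prod_congr rfl fun a _ => ?_
      rw [← neg_sub (v i) (v a), inv_neg]; ring
    rw [h1, Finset.prod_mul_distrib, Finset.prod_const, Finset.card_erase_of_mem hi]
    ring
  rw [Finset.sum_congr rfl hcg, ← Finset.mul_sum, key, mul_zero]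

theorem more_identities_core (n : ℕ) (k : ℕ) (hk2 : 2 ≤ k) (hk : k ≤ n)
    (L : Tab ℂ)
    (h1 : L.p k 1 = 1 / 2) (h2 : L.p k k = L.u k k)
    (h3 : ∀ i, 2 ≤ i → i ≤ k - 1 → L.u k i = L.p k i ∧ L.p k i = L.u (k - 1) i)
    (h4 : L.u k 1 + L.u (k - 1) 1 = 1)
    (m : ℕ) (hm1 : 1 ≤ m) (hm : m ≤ k - 1)
    (hden1 : ∀ i a, 1 ≤ i → i ≤ k → 1 ≤ a → a ≤ k → a ≠ i → L.p k a - L.p k i ≠ 0)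
    (hden2 : ∀ i a, 1 ≤ i → i ≤ k → 1 ≤ a → a ≤ k → a ≠ i → L.p k a - (L.p k i + 1) ≠ 0) :
    ∑ i ∈ Finset.Icc 1 k,
      coD k i 1 m L * coB k i (L.addZ (deltaP k i + deltaU (k - 1) 1)) = 0 := by
  classical
  have hkk : k - 1 < k := by omega
  have h1k : (1 : ℕ) ∈ Finset.Icc 1 k := by simp [Finset.mem_Icc]; omega
  have h1k1 : (1 : ℕ) ∈ Finset.Icc 1 (k - 1) := by simp [Finset.mem_Icc]; omega
  have hsetA : (Finset.Icc 1 k).erase 1 = Finset.Icc 2 k := by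
    ext a; simp [Finset.mem_erase, Finset.mem_Icc]; omega
  have hsetB : (Finset.Icc 1 (k - 1)).erase 1 = Finset.Icc 2 (k - 1) := by
    ext a; simp [Finset.mem_erase, Finset.mem_Icc]; omega
  set Qp : Polynomial ℂ := Lagrange.nodal (Finset.Icc 2 (k - 1)) (fun a => L.p k a - 1)
    with hQp
  have hcard : (Finset.Icc 1 k).card = k := by rw [Nat.card_Icc]; omega
  have hcard2 : (Finset.Icc 2 (k - 1)).card = k - 2 := by rw [Nat.card_Icc]; omega
  have hinj : Set.InjOn (L.p k) (Finset.Icc 1 k) := by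
    intro a ha b hb hab
    by_contra hne
    simp only [Finset.coe_Icc, Set.mem_Icc] at ha hb
    exact hden1 b a hb.1 hb.2 ha.1 ha.2 hne (by rw [hab, sub_self])
  have hdeg : Qp.degree < (((Finset.Icc 1 k).card - 1 : ℕ) : WithBot ℕ) := by
    rw [hQp, Lagrange.degree_nodal, hcard2, hcard]
    exact_mod_cast (by omega : k - 2 < k - 1)
  have hlag := lagrange_zero (Finset.Icc 1 k) (L.p k) hinj Qp hdeg
  have hQev : ∀ t : ℂ, Qp.eval t = ∏ a ∈ Finset.Icc 2 (k - 1), (t - (L.p k a - 1)) := by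
    intro t; rw [hQp, Lagrange.eval_nodal]
  set c : ℂ := coA (k - 1) m L * coC k 1 L *
      (∏ a ∈ (Finset.Icc 1 (k - 1)).erase m, (L.u (k - 1) 1 ^ 2 - L.p (k - 1) a ^ 2)) *
      (-4) * (∏ a ∈ Finset.Icc 1 k, (L.u (k - 1) 1 ^ 2 - L.p k a ^ 2)) * (-1) ^ (k - 2)
    with hc
  have hterm : ∀ i ∈ Finset.Icc 1 k,
      coD k i 1 m L * coB k i (L.addZ (deltaP k i + deltaU (k - 1) 1))
        = c * (Qp.eval (L.p k i) *
            ∏ a ∈ (Finset.Icc 1 k).erase i, (L.p k a - L.p k i)⁻¹) := by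
    intro i hi
    have hi1 : 1 ≤ i := (Finset.mem_Icc.mp hi).1
    have hik : i ≤ k := (Finset.mem_Icc.mp hi).2
    -- entries of the shifted tableau
    have epk : ∀ a, (L.addZ (deltaP k i + deltaU (k - 1) 1)).p k a
        = L.p k a + if a = i then 1 else 0 := by
      intro a
      rw [Tab.addZ_p, Tab.add_p]
      simp only [deltaP, deltaU, true_and]
      split_ifs with h <;> simp [h]
    have euk : ∀ a, (L.addZ (deltaP k i + deltaU (k - 1) 1)).u k a = L.u k a := by
      intro a
      rw [Tab.addZ_u, Tab.add_u]
      simp only [deltaP, deltaU]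
      have : ¬(k = k - 1 ∧ a = 1) := by omega
      simp [this]
    have euk1 : ∀ a, (L.addZ (deltaP k i + deltaU (k - 1) 1)).u (k - 1) a
        = L.u (k - 1) a + if a = 1 then 1 else 0 := by
      intro a
      rw [Tab.addZ_u, Tab.add_u]
      simp only [deltaP, deltaU, true_and]
      split_ifs with h <;> simp [h]
    have hpki : (L.addZ (deltaP k i + deltaU (k - 1) 1)).p k i = L.p k i + 1 := by
      rw [epk]; simp
    have hhalf : L.p k i + 1 / 2 ≠ 0 := by
      rcases eq_or_lt_of_le hi1 with hi1' | hi2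
      · rw [← hi1', h1]; norm_num
      · have hd := hden2 i 1 hi1 hik le_rfl (by omega) (by omega)
        intro h
        exact hd (by rw [h1]; linear_combination -h)
    -- coA of the shifted tableau
    have hA' : coA k i (L.addZ (deltaP k i + deltaU (k - 1) 1))
        = (∏ a ∈ (Finset.Icc 1 k).erase i, (L.p k a - (L.p k i + 1)))⁻¹ := by
      simp only [coA]
      rw [← Finset.prod_inv_distrib]
      refine Finset.prod_congr rfl fun a ha => ?_
      have hne : a ≠ i := (Finset.mem_erase.mp ha).1
      rw [epk, hpki, if_neg hne, add_zero]
    -- the ratio identity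
    have hN : (∏ a ∈ (Finset.Icc 1 k).erase i, (L.p k a - (L.p k i + 1)))⁻¹ *
        (∏ a ∈ Finset.Icc 2 k, (L.p k a - (L.p k i + 1))) = (L.p k i + 1 / 2)⁻¹ := by
      rcases eq_or_lt_of_le hi1 with hi1' | hi2
      · -- i = 1
        subst hi1'
        rw [hsetA]
        have hz : (∏ a ∈ Finset.Icc 2 k, (L.p k a - (L.p k 1 + 1))) ≠ 0 := by
          refine Finset.prod_ne_zero_iff.mpr fun a ha => ?_
          have ha' := Finset.mem_Icc.mp ha
          exact hden2 1 a le_rfl (by omega) (by omega) ha'.2 (by omega)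
        rw [inv_mul_cancel₀ hz, h1]
        norm_num
      · -- 2 ≤ i
        have hiI : i ∈ Finset.Icc 2 k := by simp [Finset.mem_Icc]; omega
        have hsetC : (Finset.Icc 1 k).erase i = insert 1 ((Finset.Icc 2 k).erase i) := by
          ext a; simp [Finset.mem_erase, Finset.mem_Icc, Finset.mem_insert]; omega
        have h1notin : (1 : ℕ) ∉ (Finset.Icc 2 k).erase i := by
          simp [Finset.mem_erase, Finset.mem_Icc]
        rw [← Finset.mul_prod_erase _ _ hiI, hsetC, Finset.prod_insert h1notin]
        have hT : (∏ a ∈ (Finset.Icc 2 k).erase i, (L.p k a - (L.p k i + 1))) ≠ 0 := by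
          refine Finset.prod_ne_zero_iff.mpr fun a ha => ?_
          have ha1 := (Finset.mem_erase.mp ha).1
          have ha' := Finset.mem_Icc.mp (Finset.mem_of_mem_erase ha)
          exact hden2 i a hi1 hik (by omega) ha'.2 ha1
        have hf1 : L.p k 1 - (L.p k i + 1) = -(L.p k i + 1 / 2) := by
          rw [h1]; ring
        have hfi : L.p k i - (L.p k i + 1) = -1 := by ring
        rw [hf1, hfi]
        have hc2 : L.p k i * 2 + 1 ≠ 0 := by
          intro h; exact hhalf (by linear_combination h / 2)
        field_simp
    have hinv : (L.p k i + 1 / 2) * (L.p k i + 1 / 2)⁻¹ = 1 := mul_inv_cancel₀ hhalf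
    -- products in coB
    have hP1 : (∏ a ∈ Finset.Icc 1 k, ((L.addZ (deltaP k i + deltaU (k - 1) 1)).u k a
          - (L.addZ (deltaP k i + deltaU (k - 1) 1)).p k i))
        = (-(L.u (k - 1) 1) - L.p k i) *
          ∏ a ∈ Finset.Icc 2 k, (L.p k a - (L.p k i + 1)) := by
      have hcg : ∀ a ∈ Finset.Icc 1 k,
          (L.addZ (deltaP k i + deltaU (k - 1) 1)).u k a
            - (L.addZ (deltaP k i + deltaU (k - 1) 1)).p k i
          = L.u k a - (L.p k i + 1) := fun a _ => by rw [euk, hpki]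
      rw [Finset.prod_congr rfl hcg, ← Finset.mul_prod_erase _ _ h1k, hsetA]
      congr 1
      · linear_combination h4
      · refine Finset.prod_congr rfl fun a ha => ?_
        have ha' := Finset.mem_Icc.mp ha
        rcases eq_or_lt_of_le ha'.2 with hak | hak
        · rw [hak, h2]
        · rw [(h3 a ha'.1 (by omega)).1]
    have hP2 : (∏ a ∈ Finset.Icc 1 (k - 1), ((L.addZ (deltaP k i + deltaU (k - 1) 1)).u (k - 1) a
          - (L.addZ (deltaP k i + deltaU (k - 1) 1)).p k i))
        = (L.u (k - 1) 1 - L.p k i) *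
          ∏ a ∈ Finset.Icc 2 (k - 1), (L.p k a - (L.p k i + 1)) := by
      have hcg : ∀ a ∈ Finset.Icc 1 (k - 1),
          (L.addZ (deltaP k i + deltaU (k - 1) 1)).u (k - 1) a
            - (L.addZ (deltaP k i + deltaU (k - 1) 1)).p k i
          = L.u (k - 1) a + (if a = 1 then 1 else 0) - (L.p k i + 1) :=
        fun a _ => by rw [euk1, hpki]
      rw [Finset.prod_congr rfl hcg, ← Finset.mul_prod_erase _ _ h1k1, hsetB]
      congr 1
      · rw [if_pos rfl]; ring
      · refine Finset.prod_congr rfl fun a ha => ?_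
        have ha' := Finset.mem_Icc.mp ha
        have hne : a ≠ 1 := by omega
        rw [if_neg hne, add_zero]
        linear_combination -(h3 a ha'.1 ha'.2).2
    -- coB value
    have hB : coB k i (L.addZ (deltaP k i + deltaU (k - 1) 1))
        = 4 * (L.p k i ^ 2 - L.u (k - 1) 1 ^ 2) *
          ∏ a ∈ Finset.Icc 2 (k - 1), (L.p k a - (L.p k i + 1)) := by
      simp only [coB]
      rw [hA', hP1, hP2, hpki]
      linear_combination
        (2 * (2 * L.p k i + 1) * (-(L.u (k - 1) 1) - L.p k i) * (L.u (k - 1) 1 - L.p k i) *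
          (∏ a ∈ Finset.Icc 2 (k - 1), (L.p k a - (L.p k i + 1)))) * hN +
        (4 * (L.p k i ^ 2 - L.u (k - 1) 1 ^ 2) *
          (∏ a ∈ Finset.Icc 2 (k - 1), (L.p k a - (L.p k i + 1)))) * hinv
    have hM : (∏ a ∈ Finset.Icc 2 (k - 1), (L.p k a - (L.p k i + 1)))
        = (-1) ^ (k - 2) * Qp.eval (L.p k i) := by
      rw [hQev]
      have hcg : ∀ a ∈ Finset.Icc 2 (k - 1),
          L.p k a - (L.p k i + 1) = (-1) * (L.p k i - (L.p k a - 1)) := fun a _ => by ring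
      rw [Finset.prod_congr rfl hcg, Finset.prod_mul_distrib, Finset.prod_const, hcard2]
    have hAi : coA k i L = ∏ a ∈ (Finset.Icc 1 k).erase i, (L.p k a - L.p k i)⁻¹ := rfl
    have hG : (∏ a ∈ (Finset.Icc 1 k).erase i, (L.u (k - 1) 1 ^ 2 - L.p k a ^ 2)) *
          (L.p k i ^ 2 - L.u (k - 1) 1 ^ 2)
        = -∏ a ∈ Finset.Icc 1 k, (L.u (k - 1) 1 ^ 2 - L.p k a ^ 2) := by
      have hfull := Finset.mul_prod_erase (Finset.Icc 1 k)
        (fun a => L.u (k - 1) 1 ^ 2 - L.p k a ^ 2) hi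
      linear_combination -hfull
    rw [hB, hM]
    simp only [coD]
    rw [hc, ← hAi]
    linear_combination (coA k i L * coA (k - 1) m L * coC k 1 L *
      (∏ a ∈ (Finset.Icc 1 (k - 1)).erase m, (L.u (k - 1) 1 ^ 2 - L.p (k - 1) a ^ 2)) *
      4 * (-1) ^ (k - 2) * Qp.eval (L.p k i)) * hG
  calc ∑ i ∈ Finset.Icc 1 k,
        coD k i 1 m L * coB k i (L.addZ (deltaP k i + deltaU (k - 1) 1))
      = ∑ i ∈ Finset.Icc 1 k, c * (Qp.eval (L.p k i) *
          ∏ a ∈ (Finset.Icc 1 k).erase i, (L.p k a - L.p k i)⁻¹) :=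
        Finset.sum_congr rfl hterm
    _ = c * ∑ i ∈ Finset.Icc 1 k, Qp.eval (L.p k i) *
          ∏ a ∈ (Finset.Icc 1 k).erase i, (L.p k a - L.p k i)⁻¹ := by
        rw [Finset.mul_sum]
    _ = 0 := by rw [hlag, mul_zero]


/-- Lemma "more identities": on a tableau `T(L) ∈ 𝔅(μ,λ)` with
`ℓ'_{k1} = 1/2`, `ℓ'_{kk} = ℓ_{kk}`, `ℓ_{ki} = ℓ'_{ki} = ℓ_{k-1,i}` for `2 ≤ i ≤ k-1`, and
`ℓ_{k1} + ℓ_{k-1,1} = 1`, one has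
`∑_{i=1}^{k} D_{ki1m}(L) B_{ki}(L + δ^{(ki)'} + δ^{(k-1,1)}) = 0` for every `m ∈ [k-1]`,
provided all the denominators occurring are nonzero. -/
theorem more_identities (n : ℕ) (hn : 2 ≤ n) (mu lam : Fin n → ℂ)
    (hmu : ∀ i, ¬IsInt (mu i)) (hlam : ∀ i, IsHalfInt (lam i)) (hdom : SODominant lam)
    (k : ℕ) (hk2 : 2 ≤ k) (hk : k ≤ n)
    (L : Tab ℂ) (hL : L ∈ TabB n mu lam)
    (h1 : L.p k 1 = 1 / 2) (h2 : L.p k k = L.u k k)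
    (h3 : ∀ i, 2 ≤ i → i ≤ k - 1 → L.u k i = L.p k i ∧ L.p k i = L.u (k - 1) i)
    (h4 : L.u k 1 + L.u (k - 1) 1 = 1)
    (m : ℕ) (hm1 : 1 ≤ m) (hm : m ≤ k - 1)
    (hden1 : ∀ i a, 1 ≤ i → i ≤ k → 1 ≤ a → a ≤ k → a ≠ i → L.p k a - L.p k i ≠ 0)
    (hden2 : ∀ i a, 1 ≤ i → i ≤ k → 1 ≤ a → a ≤ k → a ≠ i → L.p k a - (L.p k i + 1) ≠ 0)
    (hden3 : ∀ a, 1 ≤ a → a ≤ k - 1 → a ≠ m → L.p (k - 1) a - L.p (k - 1) m ≠ 0)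
    (hden4 : 2 * L.u (k - 1) 1 - 1 ≠ 0)
    (hden5 : ∀ a, 2 ≤ a → a ≤ k - 1 →
      L.u (k - 1) 1 - L.u (k - 1) a ≠ 0 ∧ L.u (k - 1) 1 + L.u (k - 1) a - 1 ≠ 0) :
    ∑ i ∈ Finset.Icc 1 k,
      coD k i 1 m L * coB k i (L.addZ (deltaP k i + deltaU (k - 1) 1)) = 0 := by
  exact more_identities_core n k hk2 hk L h1 h2 h3 h4 m hm1 hm hden1 hden2

end GTpaper
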